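/- For an (n,k,δ) convolutional code C over a finite field F_q, the free distance satisfies d_free(C) ≤ (n-k)(⌊δ/k⌋ + 1) + δ + 1 (the generalized Singleton bound). -/

import Mathlib

open Polynomial

/-- Hamming weight of a polynomial vector: total number of nonzero coefficients. -/
noncomputable def wtVec {F : Type*} [Field F] {n : ℕ} (v : Fin n → F[X]) : ℕ :=
  ∑ j, (v j).support.card

/-- Free distance: minimum Hamming weight of a nonzero codeword. -/
noncomputable def dfree {F : Type*} [Field F] {n : ℕ}
    (C : Submodule F[X] (Fin n → F[X])) : ℕ :=
  sInf { w | ∃ v ∈ C, v ≠ 0 ∧ wtVec v = w }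

/-- Internal degree: maximal degree of the k×k minors of G. -/
noncomputable def intDeg {F : Type*} [Field F] {k n : ℕ}
    (G : Matrix (Fin k) (Fin n) F[X]) : ℕ :=
  Finset.univ.sup fun σ : Fin k ↪ Fin n => ((G.submatrix id σ).det).natDegree

open Matrix

open scoped Classical in
lemma block_singleton {F : Type*} [Field F] {ι : Type*} [Fintype ι] [DecidableEq ι]
    (V : Submodule F (ι → F)) (d : ℕ) (hd1 : 1 ≤ d) (hd : d ≤ Module.finrank F V) :
    ∃ y, y ∈ V ∧ y ≠ 0 ∧
      (Finset.univ.filter fun i => y i ≠ 0).card ≤ Fintype.card ι - d + 1 := by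
  classical
  have hVle : Module.finrank F V ≤ Fintype.card ι := by
    simpa using Submodule.finrank_le V
  obtain ⟨S, -, hScard⟩ := Finset.exists_subset_card_eq
    (by simpa using (by omega : d - 1 ≤ Fintype.card ι) : d - 1 ≤ (Finset.univ : Finset ι).card)
  let π : V →ₗ[F] (↥S → F) :=
    (LinearMap.funLeft F F (fun s : ↥S => (s : ι))).comp V.subtype
  have hker : LinearMap.ker π ≠ ⊥ := by
    intro hbot
    have h1 := LinearMap.finrank_range_add_finrank_ker π
    have h2 : Module.finrank F (LinearMap.range π) ≤ d - 1 := by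
      have := Submodule.finrank_le (LinearMap.range π)
      simpa [Module.finrank_pi, Fintype.card_coe, hScard] using this
    rw [hbot, finrank_bot] at h1
    have h3 : Module.finrank F V = Module.finrank F ↥(LinearMap.range π) := by omega
    omega
  obtain ⟨⟨y, hyV⟩, hyker, hy0⟩ := (Submodule.ne_bot_iff _).mp hker
  refine ⟨y, hyV, ?_, ?_⟩
  · intro h
    exact hy0 (by simpa [Submodule.mk_eq_zero] using h)
  · have hyS : ∀ i ∈ S, y i = 0 := by
      intro i hi
      have := LinearMap.mem_ker.mp hyker
      have := congrFun this ⟨i, hi⟩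
      simpa [π, LinearMap.funLeft] using this
    have hsub : (Finset.univ.filter fun i => y i ≠ 0) ⊆ Finset.univ \ S := by
      intro i hi
      simp only [Finset.mem_filter, Finset.mem_univ, true_and] at hi
      simp only [Finset.mem_sdiff, Finset.mem_univ, true_and]
      intro hiS
      exact hi (hyS i hiS)
    calc (Finset.univ.filter fun i => y i ≠ 0).card ≤ (Finset.univ \ S).card :=
          Finset.card_le_card hsub
      _ = Fintype.card ι - (d - 1) := by
          rw [Finset.card_sdiff_of_subset (Finset.subset_univ S), hScard, Finset.card_univ]
      _ ≤ Fintype.card ι - d + 1 := by omega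

lemma coeff_prod_natDegree_le' {R : Type*} [CommRing R] {ι : Type*} (s : Finset ι)
    (f : ι → R[X]) (d : ι → ℕ) (h : ∀ i ∈ s, (f i).natDegree ≤ d i) :
    (∏ i ∈ s, f i).coeff (∑ i ∈ s, d i) = ∏ i ∈ s, (f i).coeff (d i) := by
  classical
  induction s using Finset.induction_on with
  | empty => simp
  | insert a s' ha ih =>
    rw [Finset.prod_insert ha, Finset.sum_insert ha, Finset.prod_insert ha]
    rw [coeff_mul_add_eq_of_natDegree_le (h a (Finset.mem_insert_self a s'))
      ((natDegree_prod_le _ _).trans (Finset.sum_le_sum fun i hi =>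
        h i (Finset.mem_insert_of_mem hi)))]
    rw [ih fun i hi => h i (Finset.mem_insert_of_mem hi)]

lemma coeff_det_submatrix {F : Type*} [Field F] {k n : ℕ}
    (H : Matrix (Fin k) (Fin n) F[X]) (d : Fin k → ℕ)
    (hdeg : ∀ i j, (H i j).natDegree ≤ d i) (τ : Fin k → Fin n) :
    ((H.submatrix id τ).det).coeff (∑ i, d i) =
      ((Matrix.of fun i j => (H i j).coeff (d i)).submatrix id τ).det := by
  classical
  rw [Matrix.det_apply, Matrix.det_apply, Polynomial.finset_sum_coeff]
  refine Finset.sum_congr rfl fun σ _ => ?_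
  have hcp : (∏ i, (H.submatrix id τ) (σ i) i).coeff (∑ i, d i)
      = ∏ i, ((H (σ i) (τ i)).coeff (d (σ i))) := by
    rw [← Equiv.sum_comp σ d]
    exact coeff_prod_natDegree_le' Finset.univ _ _ fun i _ => hdeg (σ i) (τ i)
  rw [show ((Equiv.Perm.sign σ • ∏ i, (H.submatrix id τ) (σ i) i).coeff (∑ i, d i))
      = Equiv.Perm.sign σ • ((∏ i, (H.submatrix id τ) (σ i) i).coeff (∑ i, d i)) from
    Polynomial.coeff_smul _ _ _, hcp]
  rfl
lemma exists_unit_submatrix {F : Type*} [Field F] {k n : ℕ}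
    (L : Matrix (Fin k) (Fin n) F) (hL : LinearIndependent F (fun i => L i)) :
    ∃ τ : Fin k ↪ Fin n, IsUnit (L.submatrix id τ) := by
  classical
  have hrank : L.rank = k := by simpa using hL.rank_matrix
  have hspan : Submodule.span F (Set.range Lᵀ) = ⊤ := by
    apply Submodule.eq_top_of_finrank_eq
    have := (Matrix.rank_eq_finrank_span_cols L).symm
    rw [hrank] at this
    have h2 : Module.finrank F (Fin k → F) = k := by simp
    exact this.trans h2.symm
  obtain ⟨b, hbsub, hbspan, hbind⟩ := exists_linearIndependent F (Set.range Lᵀ)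
  rw [hspan] at hbspan
  have hbfin : b.Finite := hbind.setFinite
  haveI := hbfin.fintype
  have hbcard : Fintype.card b = k := by
    have hb : Module.finrank F (Submodule.span F b) = Fintype.card b := by
      have := finrank_span_eq_card (R := F) (b := (Subtype.val : b → (Fin k → F))) hbind
      rw [show Set.range (Subtype.val : b → (Fin k → F)) = b from Subtype.range_val] at this
      exact this
    rw [hbspan] at hb
    simpa [Module.finrank_pi] using hb.symm
  let e : Fin k ≃ b := (Fintype.equivFinOfCardEq hbcard).symm
  have hch : ∀ x : b, ∃ j : Fin n, Lᵀ j = (x : Fin k → F) := fun x => hbsub x.2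
  choose j hj using hch
  have hjinj : Function.Injective fun t : Fin k => j (e t) := by
    intro t t' h
    have h' : j (e t) = j (e t') := h
    have : ((e t : (Fin k → F))) = (e t' : (Fin k → F)) := by
      rw [← hj (e t), ← hj (e t'), h']
    exact e.injective (Subtype.ext this)
  refine ⟨⟨fun t => j (e t), hjinj⟩, ?_⟩
  rw [← Matrix.linearIndependent_cols_iff_isUnit]
  simp only [Function.Embedding.coeFn_mk]
  have hcols : (fun t : Fin k => (L.submatrix id (fun t => j (e t)))ᵀ t)
      = fun t => ((e t : Fin k → F)) := by
    funext t
    rw [← hj (e t)]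
    rfl
  rw [show (L.submatrix id fun t => j (e t)).col = _ from hcols]
  exact hbind.comp (fun t => e t) (fun a a' h => e.injective (by simpa using h))

noncomputable def rdeg {F : Type*} [Field F] {n : ℕ} (v : Fin n → F[X]) : ℕ :=
  Finset.univ.sup fun j => (v j).natDegree

lemma le_rdeg {F : Type*} [Field F] {n : ℕ} (v : Fin n → F[X]) (j : Fin n) :
    (v j).natDegree ≤ rdeg v :=
  Finset.le_sup (f := fun j => (v j).natDegree) (Finset.mem_univ j)

lemma rdeg_le {F : Type*} [Field F] {n : ℕ} {v : Fin n → F[X]} {m : ℕ}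
    (h : ∀ j, (v j).natDegree ≤ m) : rdeg v ≤ m := Finset.sup_le fun j _ => h j

lemma exists_low_degree_rows {F : Type*} [Field F] {n k : ℕ}
    (G : Matrix (Fin k) (Fin n) F[X])
    (hind : LinearIndependent F[X] (fun i => G i)) :
    ∃ H : Matrix (Fin k) (Fin n) F[X],
      LinearIndependent F[X] (fun i => H i) ∧
      (∀ i, (H i) ∈ Submodule.span F[X] (Set.range fun i => G i)) ∧
      ∑ i, rdeg (H i) ≤ intDeg G := by
  classical
  set SpG := Submodule.span F[X] (Set.range fun i => G i) with hSpG
  let P : Matrix (Fin k) (Fin n) F[X] → Prop := fun M =>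
    LinearIndependent F[X] (fun i => M i) ∧
      Submodule.span F[X] (Set.range fun i => M i) = SpG
  let T : Set ℕ := {s | ∃ M, P M ∧ ∑ i, rdeg (M i) = s}
  have hTne : T.Nonempty := ⟨_, G, ⟨hind, rfl⟩, rfl⟩
  obtain ⟨H, hPH, hHs⟩ : ∃ M, P M ∧ ∑ i, rdeg (M i) = sInf T := Nat.sInf_mem hTne
  set s0 := sInf T with hs0
  set d : Fin k → ℕ := fun i => rdeg (H i) with hd
  set L : Matrix (Fin k) (Fin n) F := Matrix.of (fun i j => (H i j).coeff (d i)) with hL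
  have hHmem : ∀ i, H i ∈ SpG := fun i => hPH.2 ▸ Submodule.subset_span ⟨i, rfl⟩
  have hdegH : ∀ i j, (H i j).natDegree ≤ d i := fun i j => le_rdeg (H i) j
  by_cases hLI : LinearIndependent F (fun i => L i)
  · -- row reduced case
    obtain ⟨τ, hτ⟩ := exists_unit_submatrix L hLI
    have hdetL : (L.submatrix id ⇑τ).det ≠ 0 :=
      ((Matrix.isUnit_iff_isUnit_det _).mp hτ).ne_zero
    have hc := coeff_det_submatrix H d hdegH ⇑τ
    have hle : ∑ i, d i ≤ ((H.submatrix id ⇑τ).det).natDegree :=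
      le_natDegree_of_ne_zero (by rw [hc]; exact hdetL)
    -- A and B matrices
    have hA' : ∀ i, ∃ c : Fin k → F[X], ∑ l, c l • G l = H i := by
      intro i
      exact (Submodule.mem_span_range_iff_exists_fun F[X]).mp (by rw [hSpG] at hHmem; exact hHmem i)
    choose A hA using hA'
    have hB' : ∀ i, ∃ c : Fin k → F[X], ∑ l, c l • H l = G i := by
      intro i
      refine (Submodule.mem_span_range_iff_exists_fun F[X]).mp ?_
      rw [hPH.2]
      exact Submodule.subset_span ⟨i, rfl⟩
    choose B hB using hB'
    have hABH : ∀ i, ∑ m, (∑ l, A i l * B l m) • H m = H i := by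
      intro i
      calc ∑ m, (∑ l, A i l * B l m) • H m
          = ∑ m, ∑ l, (A i l * B l m) • H m := by
            refine Finset.sum_congr rfl fun m _ => ?_
            rw [Finset.sum_smul]
        _ = ∑ l, ∑ m, (A i l * B l m) • H m := Finset.sum_comm
        _ = ∑ l, A i l • G l := by
            refine Finset.sum_congr rfl fun l _ => ?_
            rw [← hB l, Finset.smul_sum]
            exact Finset.sum_congr rfl fun m _ => (mul_smul _ _ _)
        _ = H i := hA i
    have hABone : Matrix.of A * Matrix.of B = 1 := by
      refine Matrix.ext fun i m => ?_
      have hz : ∑ m, ((∑ l, A i l * B l m) - (if i = m then 1 else 0)) • H m = 0 := by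
        simp only [sub_smul, Finset.sum_sub_distrib, hABH, ite_smul, one_smul, zero_smul]
        rw [sub_eq_zero]
        exact (Fintype.sum_ite_eq i (fun x => (H x : Fin n → F[X]))).symm
      have h1 := Fintype.linearIndependent_iff.mp hPH.1 _ hz m
      have h0 : (∑ l, A i l * B l m) = (if i = m then 1 else 0) := sub_eq_zero.mp h1
      rw [Matrix.mul_apply, Matrix.one_apply]
      exact h0
    have hdetA : IsUnit (Matrix.of A).det := by
      have := congrArg Matrix.det hABone
      rw [Matrix.det_mul, Matrix.det_one] at this
      exact IsUnit.of_mul_eq_one _ this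
    have hHAG : H.submatrix id ⇑τ = Matrix.of A * (G.submatrix id ⇑τ) := by
      refine Matrix.ext fun i j => ?_
      rw [Matrix.mul_apply]
      have h1 := congrFun (hA i) (τ j)
      simp only [Finset.sum_apply, Pi.smul_apply, smul_eq_mul] at h1
      simpa [Matrix.submatrix_apply] using h1.symm
    obtain ⟨r, hr, hCr⟩ := Polynomial.isUnit_iff.mp hdetA
    have hnd : ((H.submatrix id ⇑τ).det).natDegree = ((G.submatrix id ⇑τ).det).natDegree := by
      rw [hHAG, Matrix.det_mul, ← hCr, natDegree_C_mul hr.ne_zero]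
    refine ⟨H, hPH.1, fun i => hHmem i, ?_⟩
    calc ∑ i, rdeg (H i) = ∑ i, d i := rfl
      _ ≤ ((G.submatrix id ⇑τ).det).natDegree := by rw [← hnd]; exact hle
      _ ≤ intDeg G :=
          Finset.le_sup (f := fun σ : Fin k ↪ Fin n => ((G.submatrix id σ).det).natDegree)
            (Finset.mem_univ τ)
  · -- descent case: contradiction with minimality
    exfalso
    obtain ⟨g, hgsum, i1, hgi1⟩ := Fintype.not_linearIndependent_iff.mp hLI
    have hT'ne : (Finset.univ.filter fun i => g i ≠ 0).Nonempty :=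
      ⟨i1, Finset.mem_filter.mpr ⟨Finset.mem_univ i1, hgi1⟩⟩
    obtain ⟨i0, hi0T, hi0max⟩ := Finset.exists_max_image _ d hT'ne
    have hg0 : g i0 ≠ 0 := (Finset.mem_filter.mp hi0T).2
    set c : Fin k → F[X] := fun i => C (g i) * X ^ (d i0 - d i) with hcdef
    set h' : Fin n → F[X] := ∑ i, c i • H i with hh'
    have hc0 : c i0 = C (g i0) := by simp [hcdef]
    have happ : ∀ jj, h' jj = ∑ i, c i * H i jj := by
      intro jj
      rw [hh', Finset.sum_apply]
      exact Finset.sum_congr rfl fun i _ => rfl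
    have hdeg' : ∀ jj : Fin n, (h' jj).natDegree ≤ d i0 := by
      intro jj
      rw [happ]
      refine natDegree_sum_le_of_forall_le _ _ fun i _ => ?_
      by_cases hgi : g i = 0
      · simp [hcdef, hgi]
      · have hdi : d i ≤ d i0 :=
          hi0max i (Finset.mem_filter.mpr ⟨Finset.mem_univ i, hgi⟩)
        calc (c i * H i jj).natDegree ≤ (c i).natDegree + (H i jj).natDegree :=
              natDegree_mul_le
          _ ≤ ((C (g i)).natDegree + (X ^ (d i0 - d i) : F[X]).natDegree) + d i := by
              refine add_le_add (natDegree_mul_le) (hdegH i jj)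
          _ ≤ (d i0 - d i) + d i := by
              rw [natDegree_C, natDegree_X_pow]; omega
          _ = d i0 := by omega
    have hcoeff0 : ∀ jj, (h' jj).coeff (d i0) = 0 := by
      intro jj
      rw [happ, Polynomial.finset_sum_coeff]
      have hterm : ∀ i, (c i * H i jj).coeff (d i0) = g i * L i jj := by
        intro i
        by_cases hgi : g i = 0
        · simp [hcdef, hgi, hL]
        · have hdi : d i ≤ d i0 :=
            hi0max i (Finset.mem_filter.mpr ⟨Finset.mem_univ i, hgi⟩)
          rw [hcdef]
          rw [mul_assoc, Polynomial.coeff_C_mul]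
          have hx : (X ^ (d i0 - d i) * H i jj).coeff (d i0) = (H i jj).coeff (d i) := by
            have hpm := Polynomial.coeff_X_pow_mul (H i jj) (d i0 - d i) (d i)
            rwa [show d i + (d i0 - d i) = d i0 by omega] at hpm
          rw [hx]
          rfl
      rw [Finset.sum_congr rfl fun i _ => hterm i]
      have := congrFun hgsum jj
      simpa [Finset.sum_apply] using this
    have hne : h' ≠ 0 := by
      intro h0
      have := Fintype.linearIndependent_iff.mp hPH.1 c (by rw [← hh']; exact h0) i0
      rw [hc0] at this
      exact hg0 (by simpa using this)
    have hd0pos : 1 ≤ d i0 := by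
      by_contra hcon
      push_neg at hcon
      apply hne
      funext jj
      have h1 := hdeg' jj
      have h2 := hcoeff0 jj
      have h3 : h' jj = C ((h' jj).coeff 0) := eq_C_of_natDegree_le_zero (by omega)
      rw [show d i0 = 0 by omega] at h2
      rw [h3, h2]
      simp
    have hrd : rdeg h' ≤ d i0 - 1 := by
      apply rdeg_le
      intro jj
      by_cases h0 : h' jj = 0
      · simp [h0]
      · have h1 := hdeg' jj
        have h2 : (h' jj).natDegree ≠ d i0 := by
          intro hEq
          apply Polynomial.leadingCoeff_ne_zero.mpr h0
          rw [Polynomial.leadingCoeff, hEq]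
          exact hcoeff0 jj
        omega
    -- the new matrix
    set H' : Matrix (Fin k) (Fin n) F[X] := Function.update H i0 h' with hH'
    have hH'row : ∀ i, i ≠ i0 → H' i = H i := fun i hi => Function.update_of_ne hi _ _
    have hH'i0 : H' i0 = h' := Function.update_self _ _ _
    have hind' : LinearIndependent F[X] (fun i => H' i) := by
      rw [Fintype.linearIndependent_iff]
      intro μ hμ
      have e1 : ∑ i, μ i • H' i
          = ∑ i ∈ Finset.univ.erase i0, μ i • H i + μ i0 • h' := by
        rw [← Finset.sum_erase_add _ _ (Finset.mem_univ i0), hH'i0]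
        congr 1
        exact Finset.sum_congr rfl fun i hi => by rw [hH'row i (Finset.ne_of_mem_erase hi)]
      have e2 : μ i0 • h' = ∑ i, (μ i0 * c i) • H i := by
        rw [hh', Finset.smul_sum]
        exact Finset.sum_congr rfl fun i _ => smul_smul _ _ _
      have e3 : ∑ i ∈ Finset.univ.erase i0, μ i • H i
          = ∑ i, (if i = i0 then 0 else μ i) • H i := by
        rw [← Finset.sum_erase (f := fun i => (if i = i0 then (0:F[X]) else μ i) • H i)
          (a := i0) Finset.univ (by simp)]
        exact Finset.sum_congr rfl fun i hi => by
          rw [if_neg (Finset.ne_of_mem_erase hi)]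
      have key : ∑ i, ((if i = i0 then 0 else μ i) + μ i0 * c i) • H i = 0 := by
        simp only [add_smul, Finset.sum_add_distrib]
        rw [← e3, ← e2, ← e1]
        exact hμ
      have hall := Fintype.linearIndependent_iff.mp hPH.1 _ key
      have hμi0 : μ i0 = 0 := by
        have := hall i0
        rw [if_pos rfl, zero_add, hc0] at this
        rcases mul_eq_zero.mp this with h | h
        · exact h
        · exact absurd h (by simpa using hg0)
      intro i
      by_cases hi : i = i0
      · rw [hi]; exact hμi0
      · have := hall i
        rw [if_neg hi, hμi0, zero_mul, add_zero] at this
        exact this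
    have hspan' : Submodule.span F[X] (Set.range fun i => H' i) = SpG := by
      rw [← hPH.2]
      apply le_antisymm
      · rw [Submodule.span_le]
        rintro _ ⟨i, rfl⟩
        show H' i ∈ Submodule.span F[X] (Set.range fun i => H i)
        by_cases hi : i = i0
        · rw [hi, hH'i0, hh']
          exact Submodule.sum_smul_mem _ _ fun l _ => Submodule.subset_span ⟨l, rfl⟩
        · rw [hH'row i hi]
          exact Submodule.subset_span ⟨i, rfl⟩
      · rw [Submodule.span_le]
        rintro _ ⟨i, rfl⟩
        show H i ∈ Submodule.span F[X] (Set.range fun i => H' i)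
        by_cases hi : i = i0
        · subst hi
          have hsplit : h' = c i • H i + ∑ l ∈ Finset.univ.erase i, c l • H l := by
            rw [hh']
            exact (Finset.add_sum_erase _ _ (Finset.mem_univ i)).symm
          have hexp : H i = C (g i)⁻¹ • (h' - ∑ l ∈ Finset.univ.erase i, c l • H l) := by
            rw [hsplit, add_sub_cancel_right, hc0, smul_smul, ← C_mul,
              inv_mul_cancel₀ hg0, C_1, one_smul]
          rw [hexp]
          apply Submodule.smul_mem
          apply Submodule.sub_mem
          · exact Submodule.subset_span ⟨i, hH'i0⟩
          · exact Submodule.sum_smul_mem _ _ fun l hl =>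
              Submodule.subset_span ⟨l, hH'row l (Finset.ne_of_mem_erase hl)⟩
        · exact Submodule.subset_span ⟨i, hH'row i hi⟩
    have hsum' : ∑ i, rdeg (H' i) < s0 := by
      have e : ∑ i, rdeg (H' i)
          = ∑ i ∈ Finset.univ.erase i0, rdeg (H i) + rdeg h' := by
        rw [← Finset.sum_erase_add _ _ (Finset.mem_univ i0), hH'i0]
        congr 1
        exact Finset.sum_congr rfl fun i hi => by rw [hH'row i (Finset.ne_of_mem_erase hi)]
      have e2 : ∑ i ∈ Finset.univ.erase i0, rdeg (H i) + d i0 = s0 := by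
        rw [Finset.sum_erase_add _ _ (Finset.mem_univ i0)]
        exact hHs
      omega
    have : s0 ≤ ∑ i, rdeg (H' i) := Nat.sInf_le ⟨H', ⟨hind', hspan'⟩, rfl⟩
    omega

/-- Generalized Singleton bound for an (n,k,δ) convolutional code over a finite field. -/
theorem generalized_singleton_bound {F : Type*} [Field F] [Fintype F] {n k : ℕ}
    (hk : 0 < k) (hkn : k ≤ n)
    (C : Submodule F[X] (Fin n → F[X]))
    (G : Matrix (Fin k) (Fin n) F[X])
    (hind : LinearIndependent F[X] (fun i => G i))
    (hspan : C = Submodule.span F[X] (Set.range (fun i => G i)))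
    (δ : ℕ) (hδ : δ = intDeg G) :
    dfree C ≤ (n - k) * (δ / k + 1) + δ + 1 := by
  classical
  obtain ⟨H, hHind, hHmem, hHdeg⟩ := exists_low_degree_rows G hind
  rw [← hδ] at hHdeg
  set ν := δ / k with hν
  set d : Fin k → ℕ := fun i => rdeg (H i) with hd
  let ι := Σ i : Fin k, Fin (ν + 1 - d i)
  let x : ι → (Fin n → F[X]) := fun p => (X : F[X]) ^ (p.2 : ℕ) • H p.1
  let φ : (Fin n → F[X]) →ₗ[F] (Fin n × Fin (ν+1) → F) :=
    { toFun := fun v p => (v p.1).coeff (p.2 : ℕ)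
      map_add' := by intro a b; funext p; simp
      map_smul' := by intro c v; funext p; simp }
  have hxdeg : ∀ p : ι, ∀ l, ((x p) l).natDegree ≤ ν := by
    intro p l
    have h2 : ((X:F[X]) ^ (p.2:ℕ) * H p.1 l).natDegree ≤ (p.2:ℕ) + d p.1 :=
      natDegree_mul_le.trans (by rw [natDegree_X_pow]; exact add_le_add le_rfl (le_rdeg _ l))
    have h3 : (p.2 : ℕ) < ν + 1 - d p.1 := p.2.isLt
    have hxl : (x p) l = X ^ (p.2:ℕ) * H p.1 l := rfl
    rw [hxl]
    omega
  have hφx : LinearIndependent F (fun p : ι => φ (x p)) := by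
    rw [Fintype.linearIndependent_iff]
    intro cc hcc
    set w0 : Fin n → F[X] := ∑ p : ι, cc p • x p with hw0
    have hφw0 : φ w0 = 0 := by
      rw [hw0, map_sum]
      simp_rw [_root_.map_smul]
      exact hcc
    have hw0deg : ∀ l, (w0 l).natDegree ≤ ν := by
      intro l
      have hl : w0 l = ∑ p : ι, cc p • (x p l) := by
        rw [hw0, Finset.sum_apply]
        rfl
      rw [hl]
      exact natDegree_sum_le_of_forall_le _ _ fun p _ =>
        (natDegree_smul_le _ _).trans (hxdeg p l)
    have hw00 : w0 = 0 := by
      funext l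
      refine Polynomial.ext fun m => ?_
      simp only [Pi.zero_apply, Polynomial.coeff_zero]
      by_cases hm : m ≤ ν
      · have := congrFun hφw0 (l, (⟨m, by omega⟩ : Fin (ν+1)))
        exact this
      · exact Polynomial.coeff_eq_zero_of_natDegree_lt (by have := hw0deg l; omega)
    set q : Fin k → F[X] := fun i => ∑ j : Fin (ν + 1 - d i), Polynomial.C (cc ⟨i, j⟩) * X ^ (j:ℕ) with hq
    have hrel : ∑ i, q i • H i = 0 := by
      rw [← hw00, hw0]
      rw [← Finset.univ_sigma_univ, Finset.sum_sigma]
      refine Finset.sum_congr rfl fun i _ => ?_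
      rw [hq]
      rw [Finset.sum_smul]
      refine Finset.sum_congr rfl fun j _ => ?_
      rw [← smul_assoc, Polynomial.smul_eq_C_mul]
    have hq0 := Fintype.linearIndependent_iff.mp hHind q hrel.symm.symm
    rintro ⟨i, j⟩
    have hcq : (q i).coeff (j:ℕ) = cc ⟨i, j⟩ := by
      show (∑ j' : Fin (ν + 1 - d i), Polynomial.C (cc ⟨i, j'⟩) * X ^ (j':ℕ)).coeff (j:ℕ) = cc ⟨i, j⟩
      rw [Polynomial.finset_sum_coeff]
      rw [Finset.sum_eq_single j]
      · simp [Polynomial.coeff_C_mul, Polynomial.coeff_X_pow]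
      · intro j' _ hne
        have hvne : ¬((j:ℕ) = (j':ℕ)) := fun h => hne (Fin.ext h.symm)
        simp [Polynomial.coeff_C_mul, Polynomial.coeff_X_pow, hvne]
      · intro h
        exact absurd (Finset.mem_univ j) h
    rw [hq0 i] at hcq
    simpa using hcq.symm
  set V := Submodule.span F (Set.range fun p : ι => φ (x p)) with hV
  have hVrank : Module.finrank F V = Fintype.card ι := finrank_span_eq_card hφx
  have hcardι : Fintype.card ι = ∑ i, (ν + 1 - d i) := by
    simp [ι]
  have hsumlb : k * (ν + 1) ≤ (∑ i, (ν + 1 - d i)) + ∑ i, d i := by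
    calc k * (ν+1) = ∑ _i : Fin k, (ν+1) := by
          rw [Finset.sum_const, Finset.card_univ, Fintype.card_fin, smul_eq_mul, mul_comm]
      _ ≤ ∑ i, ((ν + 1 - d i) + d i) := Finset.sum_le_sum fun i _ => by omega
      _ = _ := Finset.sum_add_distrib
  have hHdeg2 : ∑ i, d i ≤ δ := hHdeg
  have hδlt : δ < k * (ν + 1) := by
    have h1 := Nat.div_add_mod δ k
    rw [← hν] at h1
    have h2 := Nat.mod_lt δ hk
    have h3 : k * (ν+1) = k * ν + k := by ring
    omega
  set dd := k * (ν + 1) - δ with hdd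
  have hdd1 : 1 ≤ dd := by omega
  have hddle : dd ≤ Module.finrank F V := by
    rw [hVrank, hcardι]
    omega
  obtain ⟨y, hyV, hy0, hycard⟩ := block_singleton V dd hdd1 hddle
  have hyV' : y ∈ Submodule.map φ (Submodule.span F (Set.range x)) := by
    rw [← Submodule.span_image]
    rw [hV] at hyV
    rwa [show φ '' Set.range x = Set.range fun p => φ (x p) from (Set.range_comp φ x).symm]
  obtain ⟨w, hwspan, hwy⟩ := Submodule.mem_map.mp hyV'
  have hwC : w ∈ C := by
    have hsub : Submodule.span F (Set.range x) ≤ C.restrictScalars F := by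
      rw [Submodule.span_le]
      rintro _ ⟨p, rfl⟩
      show x p ∈ C
      rw [hspan]
      exact Submodule.smul_mem _ _ (hHmem p.1)
    exact hsub hwspan
  have hw0 : w ≠ 0 := by
    intro h
    apply hy0
    rw [← hwy, h, map_zero]
  let D : Submodule F (Fin n → F[X]) :=
    { carrier := {v | ∀ l, (v l).degree ≤ (ν : ℕ)}
      add_mem' := fun ha hb l => (Polynomial.degree_add_le _ _).trans (max_le (ha l) (hb l))
      zero_mem' := fun l => by simp
      smul_mem' := fun c v hv l => (Polynomial.degree_smul_le c (v l)).trans (hv l) }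
  have hwD : w ∈ D := by
    have hsub : Submodule.span F (Set.range x) ≤ D := by
      rw [Submodule.span_le]
      rintro _ ⟨p, rfl⟩
      intro l
      refine (Polynomial.degree_le_natDegree).trans ?_
      exact_mod_cast hxdeg p l
    exact hsub hwspan
  have hwdeg : ∀ l, (w l).natDegree ≤ ν := fun l =>
    Polynomial.natDegree_le_iff_degree_le.mpr (hwD l)
  have hwt : wtVec w ≤ Fintype.card (Fin n × Fin (ν+1)) - dd + 1 := by
    refine le_trans ?_ hycard
    have hper : ∀ l : Fin n, (w l).support.card ≤
        (Finset.univ.filter fun t : Fin (ν+1) => y (l, t) ≠ 0).card := by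
      intro l
      apply Finset.card_le_card_of_injOn
        (fun t => (⟨t % (ν+1), Nat.mod_lt t (Nat.succ_pos ν)⟩ : Fin (ν+1)))
      · intro t ht
        have htle : t ≤ ν :=
          (Polynomial.le_natDegree_of_ne_zero (Polynomial.mem_support_iff.mp ht)).trans (hwdeg l)
        have hmod : t % (ν+1) = t := Nat.mod_eq_of_lt (by omega)
        simp only [Finset.coe_filter, Finset.mem_filter, Finset.mem_univ, true_and, Set.mem_setOf_eq]
        rw [← hwy]
        show ¬ (w l).coeff (t % (ν+1)) = 0
        rw [hmod]
        exact Polynomial.mem_support_iff.mp ht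
      · intro a ha b hb hab
        have ha' : a % (ν+1) = a := Nat.mod_eq_of_lt (by
          have := (Polynomial.le_natDegree_of_ne_zero
            (Polynomial.mem_support_iff.mp ha)).trans (hwdeg l); omega)
        have hb' : b % (ν+1) = b := Nat.mod_eq_of_lt (by
          have := (Polynomial.le_natDegree_of_ne_zero
            (Polynomial.mem_support_iff.mp hb)).trans (hwdeg l); omega)
        have := congrArg Fin.val hab
        simpa [ha', hb'] using this
    have hfib : (Finset.univ.filter fun pt : Fin n × Fin (ν+1) => y pt ≠ 0).card
        = ∑ l : Fin n, (Finset.univ.filter fun t : Fin (ν+1) => y (l, t) ≠ 0).card := by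
      rw [Finset.card_eq_sum_card_fiberwise
        (f := Prod.fst) (t := Finset.univ) (fun x _ => Finset.mem_univ _)]
      refine Finset.sum_congr rfl fun l _ => ?_
      refine (Finset.card_nbij (fun t => (l, t)) ?_ ?_ ?_).symm
      · intro t ht
        simp only [Finset.coe_filter, Finset.mem_filter, Finset.mem_univ, true_and, Set.mem_setOf_eq] at ht
        simp [ht]
      · intro a _ b _ hab
        simpa using hab
      · rintro ⟨l', t⟩ hp
        have h1 : y (l', t) ≠ 0 ∧ l' = l := by simpa using hp
        obtain ⟨hy', rfl⟩ := h1
        exact ⟨t, by simp [hy'], rfl⟩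
    calc wtVec w = ∑ l, (w l).support.card := rfl
      _ ≤ ∑ l : Fin n, (Finset.univ.filter fun t : Fin (ν+1) => y (l, t) ≠ 0).card :=
          Finset.sum_le_sum fun l _ => hper l
      _ = (Finset.univ.filter fun pt : Fin n × Fin (ν+1) => y pt ≠ 0).card := hfib.symm
  have hflt : dfree C ≤ wtVec w := Nat.sInf_le ⟨w, hwC, hw0, rfl⟩
  have hcard2 : Fintype.card (Fin n × Fin (ν+1)) = n * (ν+1) := by simp
  have hfact1 : (n - k) * (ν + 1) + k * (ν + 1) = n * (ν + 1) := by
    rw [← add_mul]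
    congr 1
    omega
  have hfact3 : dfree C ≤ n * (ν+1) - (k*(ν+1) - δ) + 1 := by
    rw [← hdd, ← hcard2]
    exact hflt.trans hwt
  generalize hQ : (n - k) * (ν + 1) = Q at hfact1 ⊢
  generalize hB : k * (ν + 1) = B at hfact1 hfact3 hδlt
  generalize hA : n * (ν + 1) = A at hfact1 hfact3
  omega
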